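/- Let H be a real Hilbert space, C ⊆ H a nonempty convex subset, and T, U : C → C nonexpansive maps with a common fixed point p. Let u ∈ C and let N ∈ ℕ, N ≥ 1, satisfy N ≥ 2‖u − p‖. Then for every ε > 0 and every function δ : (0,1] → (0,1] there exist η ∈ [Φ(ε,δ), 1] and x ∈ F_N(p, δ(η)) such that ⟨u − x, y − x⟩ ≤ ε for all y ∈ F_N(p, η), where Φ(ε,δ) := φ(ε̃, δ̃)²/(24N) with ε̃ := ε²/(4N²), δ̃(ξ) := min{ δ(ξ²/(24N)), ξ²/(24N) } for ξ ∈ (0,1], φ(ε,δ) := min{ δ^{(i)}(1) : i ≤ r }, and r := ⌈N²/(4ε)⌉. -/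

import Mathlib

open RealInnerProductSpace

/-- `F_N(a, η) = {x ∈ C : ‖x - T x‖ ≤ η, ‖x - U x‖ ≤ η, ‖x - a‖ ≤ N}`. -/
def FN {H : Type*} [NormedAddCommGroup H] (C : Set H) (T U : H → H) (N : ℕ)
    (a : H) (η : ℝ) : Set H :=
  {x | x ∈ C ∧ ‖x - T x‖ ≤ η ∧ ‖x - U x‖ ≤ η ∧ ‖x - a‖ ≤ (N : ℝ)}

/-- `φ(ε, δ) = min{δ⁽ⁱ⁾(1) : i ≤ r}` with `r = ⌈N²/(4ε)⌉`. -/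
noncomputable def phi (N : ℕ) (ε : ℝ) (δ : ℝ → ℝ) : ℝ :=
  (Finset.range (⌈(N : ℝ) ^ 2 / (4 * ε)⌉₊ + 1)).inf' Finset.nonempty_range_add_one
    (fun i => δ^[i] 1)

/-- `Φ(ε, δ) = φ(ε̃, δ̃)²/(24N)` with `ε̃ = ε²/(4N²)` and
`δ̃(ξ) = min{δ(ξ²/(24N)), ξ²/(24N)}`. -/
noncomputable def Phi (N : ℕ) (ε : ℝ) (δ : ℝ → ℝ) : ℝ :=
  (phi N (ε ^ 2 / (4 * (N : ℝ) ^ 2))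
      (fun ξ => min (δ (ξ ^ 2 / (24 * (N : ℝ)))) (ξ ^ 2 / (24 * (N : ℝ))))) ^ 2
    / (24 * (N : ℝ))

private lemma inner_expand {H : Type*} [NormedAddCommGroup H] [InnerProductSpace ℝ H]
    (a b : H) (t : ℝ) :
    ‖a - t • b‖ ^ 2 = ‖a‖ ^ 2 - 2 * t * ⟪a, b⟫ + t ^ 2 * ‖b‖ ^ 2 := by
  rw [norm_sub_sq_real, real_inner_smul_right, norm_smul, Real.norm_eq_abs, mul_pow, sq_abs]
  ring

private lemma three_point {H : Type*} [NormedAddCommGroup H] [InnerProductSpace ℝ H]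
    (z x y : H) (t : ℝ) :
    ‖z - ((1 - t) • x + t • y)‖ ^ 2
      = (1 - t) * ‖z - x‖ ^ 2 + t * ‖z - y‖ ^ 2 - t * (1 - t) * ‖x - y‖ ^ 2 := by
  have h1 : z - ((1 - t) • x + t • y) = (z - x) - t • (y - x) := by module
  have h2 : z - y = (z - x) - (1 : ℝ) • (y - x) := by module
  rw [h1, h2, inner_expand, inner_expand, norm_sub_rev x y]
  ring

private lemma pigeon (d : ℕ → ℝ) (r : ℕ) (ε' B : ℝ) (h0 : 0 ≤ d 0)
    (hB : d (r + 1) ≤ B) (hrB : B < ((r : ℝ) + 1) * ε') :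
    ∃ i ≤ r, d (i + 1) < d i + ε' := by
  by_contra hcon
  push_neg at hcon
  have key : ∀ j, j ≤ r + 1 → d 0 + (j : ℝ) * ε' ≤ d j := by
    intro j
    induction j with
    | zero => intro _; simp
    | succ k ih =>
      intro hk
      have h1 := ih (by omega)
      have h2 := hcon k (by omega)
      push_cast
      linarith
  have hfin := key (r + 1) le_rfl
  push_cast at hfin
  linarith

set_option maxHeartbeats 2000000 in
/-- Quantitative characterization of the metric projection: there exist
`η ∈ [Φ(ε,δ), 1]` and `x ∈ F_N(p, δ(η))` such that `⟪u - x, y - x⟫ ≤ ε` for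
all `y ∈ F_N(p, η)`. -/
theorem stmt14 {H : Type*} [NormedAddCommGroup H] [InnerProductSpace ℝ H]
    (C : Set H) (hCne : C.Nonempty) (hCconv : Convex ℝ C)
    (T U : H → H) (hTmaps : Set.MapsTo T C C) (hUmaps : Set.MapsTo U C C)
    (hTne : ∀ x ∈ C, ∀ y ∈ C, ‖T x - T y‖ ≤ ‖x - y‖)
    (hUne : ∀ x ∈ C, ∀ y ∈ C, ‖U x - U y‖ ≤ ‖x - y‖)
    (p : H) (hp : p ∈ C) (hTp : T p = p) (hUp : U p = p)
    (u : H) (hu : u ∈ C)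
    (N : ℕ) (hN1 : 1 ≤ N) (hN : 2 * ‖u - p‖ ≤ (N : ℝ)) :
    ∀ ε : ℝ, 0 < ε → ∀ δ : ℝ → ℝ,
      (∀ ξ ∈ Set.Ioc (0 : ℝ) 1, δ ξ ∈ Set.Ioc (0 : ℝ) 1) →
      ∃ η ∈ Set.Icc (Phi N ε δ) 1, ∃ x ∈ FN C T U N p (δ η),
        ∀ y ∈ FN C T U N p η, ⟪u - x, y - x⟫ ≤ ε := by
  intro ε hε δ hδ
  have hn1 : (1 : ℝ) ≤ (N : ℝ) := by exact_mod_cast hN1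
  have hn0 : (0 : ℝ) < (N : ℝ) := by linarith
  set δt : ℝ → ℝ := fun ξ => min (δ (ξ ^ 2 / (24 * (N : ℝ)))) (ξ ^ 2 / (24 * (N : ℝ)))
    with hδtdef
  have hfrac : ∀ ξ : ℝ, ξ ∈ Set.Ioc (0 : ℝ) 1 → ξ ^ 2 / (24 * (N : ℝ)) ∈ Set.Ioc (0 : ℝ) 1 := by
    rintro ξ ⟨h1, h2⟩
    constructor
    · positivity
    · rw [div_le_one (by positivity)]
      nlinarith
  have hδt_mem : ∀ ξ ∈ Set.Ioc (0 : ℝ) 1, δt ξ ∈ Set.Ioc (0 : ℝ) 1 := by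
    intro ξ hξ
    have h1 := hfrac ξ hξ
    have h2 := hδ _ h1
    exact ⟨lt_min h2.1 h1.1, min_le_of_left_le h2.2⟩
  set e : ℕ → ℝ := fun i => δt^[i] 1 with hedef
  have hesucc : ∀ k, e (k + 1) = δt (e k) := fun k => Function.iterate_succ_apply' δt k 1
  have he : ∀ i, e i ∈ Set.Ioc (0 : ℝ) 1 := by
    intro i
    induction i with
    | zero => simp [hedef]
    | succ k ih => rw [hesucc]; exact hδt_mem _ ih
  set r : ℕ := ⌈(N : ℝ) ^ 2 / (4 * (ε ^ 2 / (4 * (N : ℝ) ^ 2)))⌉₊ with hrdef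
  set P : ℝ := phi N (ε ^ 2 / (4 * (N : ℝ) ^ 2)) δt with hPdef
  have hPhi_eq : Phi N ε δ = P ^ 2 / (24 * (N : ℝ)) := rfl
  have hP : P = (Finset.range (r + 1)).inf' Finset.nonempty_range_add_one (fun i => e i) := rfl
  have hP_le : ∀ i ≤ r, P ≤ e i := by
    intro i hi
    rw [hP]
    exact Finset.inf'_le _ (Finset.mem_range.mpr (by omega))
  have hP_pos : 0 < P := by
    rw [hP, Finset.lt_inf'_iff]
    exact fun i _ => (he i).1
  have hP_le1 : P ≤ 1 := by
    have h := hP_le 0 (Nat.zero_le r)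
    have : e 0 = 1 := rfl
    linarith [this ▸ h]
  have hpFN : ∀ η' : ℝ, 0 ≤ η' → p ∈ FN C T U N p η' := by
    intro η' hη'
    refine ⟨hp, ?_, ?_, ?_⟩
    · rw [hTp]; simpa using hη'
    · rw [hUp]; simpa using hη'
    · simpa using hn0.le
  by_cases hbig : (N : ℝ) ^ 2 / 2 ≤ ε
  · -- trivial case: x = p, η = 1
    have hδ1 := hδ 1 ⟨one_pos, le_refl 1⟩
    refine ⟨1, ⟨?_, le_refl 1⟩, p, hpFN _ hδ1.1.le, ?_⟩
    · rw [hPhi_eq, div_le_one (by positivity)]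
      nlinarith
    · rintro y ⟨hyC, -, -, hyp⟩
      have h1 := real_inner_le_norm (u - p) (y - p)
      have h2 := norm_nonneg (u - p)
      have h3 := norm_nonneg (y - p)
      nlinarith only [h1, h2, h3, hbig, hN, hyp, mul_le_mul hN hyp h3 hn0.le]
  · push_neg at hbig
    have hFNmono : ∀ {a b : ℝ}, a ≤ b →
        FN C T U N p a ⊆ FN C T U N p b := by
      intro a b hab x hx
      exact ⟨hx.1, hx.2.1.trans hab, hx.2.2.1.trans hab, hx.2.2.2⟩
    set S : ℕ → Set ℝ := fun i => (fun z => ‖u - z‖ ^ 2) '' (FN C T U N p (e i)) with hSdef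
    set d : ℕ → ℝ := fun i => sInf (S i) with hddef
    have hSne : ∀ i, (S i).Nonempty := fun i => ⟨_, p, hpFN _ (he i).1.le, rfl⟩
    have hSbdd : ∀ i, BddBelow (S i) := by
      intro i
      refine ⟨0, ?_⟩
      rintro _ ⟨z, -, rfl⟩
      positivity
    have hd0 : ∀ i, 0 ≤ d i :=
      fun i => le_csInf (hSne i) (by rintro _ ⟨z, -, rfl⟩; positivity)
    have hdle : ∀ i, d i ≤ ‖u - p‖ ^ 2 :=
      fun i => csInf_le (hSbdd i) ⟨p, hpFN _ (he i).1.le, rfl⟩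
    have hεt : (0 : ℝ) < ε ^ 2 / (4 * (N : ℝ) ^ 2) := by positivity
    obtain ⟨i, hir, hgap⟩ : ∃ i ≤ r, d (i + 1) < d i + ε ^ 2 / (4 * (N : ℝ) ^ 2) := by
      apply pigeon d r _ (‖u - p‖ ^ 2) (hd0 0) (hdle (r + 1))
      have hrge : (N : ℝ) ^ 2 / (4 * (ε ^ 2 / (4 * (N : ℝ) ^ 2))) ≤ (r : ℝ) := by
        rw [hrdef]; exact Nat.le_ceil _
      rw [div_le_iff₀ (by positivity)] at hrge
      nlinarith only [hrge, hεt, hN, norm_nonneg (u - p), hn0]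
    set η : ℝ := (e i) ^ 2 / (24 * (N : ℝ)) with hηdef
    have hei := he i
    have hη_mem : η ∈ Set.Ioc (0 : ℝ) 1 := hfrac _ hei
    have hsucc : e (i + 1) = min (δ η) η := by rw [hesucc]
    have hei1_le_η : e (i + 1) ≤ η := by rw [hsucc]; exact min_le_right _ _
    refine ⟨η, ⟨?_, hη_mem.2⟩, ?_⟩
    · rw [hPhi_eq, hηdef]
      have h1 := hP_le i hir
      gcongr
    obtain ⟨-, ⟨x, hxFN, rfl⟩, hxlt⟩ :=
      (csInf_lt_iff (hSbdd (i + 1)) (hSne (i + 1))).mp hgap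
    have hxC := hxFN.1
    have hxT : ‖x - T x‖ ≤ e (i + 1) := hxFN.2.1
    have hxU : ‖x - U x‖ ≤ e (i + 1) := hxFN.2.2.1
    have hxp : ‖x - p‖ ≤ (N : ℝ) := hxFN.2.2.2
    have hxδ : x ∈ FN C T U N p (δ η) := by
      apply hFNmono _ hxFN
      rw [hsucc]; exact min_le_left _ _
    refine ⟨x, hxδ, ?_⟩
    rintro y ⟨hyC, hyT, hyU, hyp⟩
    set t : ℝ := ε / (4 * (N : ℝ) ^ 2) with htdef
    have ht0 : 0 < t := by positivity
    have ht1 : t < 1 := by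
      rw [htdef, div_lt_one (by positivity)]
      nlinarith only [hbig, hn1]
    set m : H := (1 - t) • x + t • y with hmdef
    have hmC : m ∈ C := by
      rw [hmdef]
      exact hCconv hxC hyC (by linarith : (0:ℝ) ≤ 1 - t) ht0.le (by ring)
    have hLxy : ‖x - y‖ ≤ 2 * (N : ℝ) := by
      have h := norm_sub_le (x - p) (y - p)
      rw [sub_sub_sub_cancel_right] at h
      linarith
    have hmx : ‖m - x‖ = t * ‖x - y‖ := by
      have hh : m - x = t • (y - x) := by rw [hmdef]; module
      rw [hh, norm_smul, Real.norm_eq_abs, abs_of_pos ht0, norm_sub_rev y x]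
    have hmy : ‖m - y‖ = (1 - t) * ‖x - y‖ := by
      have hh : m - y = (1 - t) • (x - y) := by rw [hmdef]; module
      rw [hh, norm_smul, Real.norm_eq_abs, abs_of_pos (by linarith)]
    have hmp : ‖m - p‖ ≤ (N : ℝ) := by
      have hh : m - p = (1 - t) • (x - p) + t • (y - p) := by rw [hmdef]; module
      calc ‖m - p‖ ≤ ‖(1 - t) • (x - p)‖ + ‖t • (y - p)‖ := by
            rw [hh]; exact norm_add_le _ _
        _ = (1 - t) * ‖x - p‖ + t * ‖y - p‖ := by
            rw [norm_smul, norm_smul, Real.norm_eq_abs, Real.norm_eq_abs,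
              abs_of_pos ht0, abs_of_pos (by linarith)]
        _ ≤ (N : ℝ) := by
            nlinarith only [hxp, hyp, ht0.le, ht1.le, norm_nonneg (x - p), norm_nonneg (y - p)]
    have hη24 : 24 * (N : ℝ) * η = (e i) ^ 2 := by
      rw [hηdef]; field_simp
    have hdefect : ∀ V : H → H, Set.MapsTo V C C →
        (∀ a ∈ C, ∀ b ∈ C, ‖V a - V b‖ ≤ ‖a - b‖) →
        ‖x - V x‖ ≤ η → ‖y - V y‖ ≤ η → ‖m - V m‖ ≤ e i := by
      intro V hVmaps hVne hxV hyV
      have h1 : ‖V m - x‖ ≤ t * ‖x - y‖ + η := by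
        have tri : ‖V m - x‖ ≤ ‖V m - V x‖ + ‖V x - x‖ := by
          have := dist_triangle (V m) (V x) x
          simpa [dist_eq_norm] using this
        have a1 := hVne m hmC x hxC
        have a2 : ‖V x - x‖ ≤ η := by rw [norm_sub_rev]; exact hxV
        rw [hmx] at a1
        linarith
      have h2 : ‖V m - y‖ ≤ (1 - t) * ‖x - y‖ + η := by
        have tri : ‖V m - y‖ ≤ ‖V m - V y‖ + ‖V y - y‖ := by
          have := dist_triangle (V m) (V y) y
          simpa [dist_eq_norm] using this
        have a1 := hVne m hmC y hyC
        have a2 : ‖V y - y‖ ≤ η := by rw [norm_sub_rev]; exact hyV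
        rw [hmy] at a1
        linarith
      have hid := three_point (V m) x y t
      rw [← hmdef] at hid
      have hL0 : (0 : ℝ) ≤ ‖x - y‖ := norm_nonneg _
      have hVm1 : (0 : ℝ) ≤ ‖V m - x‖ := norm_nonneg _
      have hVm2 : (0 : ℝ) ≤ ‖V m - y‖ := norm_nonneg _
      have e1 : ‖V m - x‖ ^ 2 ≤ (t * ‖x - y‖ + η) ^ 2 := by
        nlinarith only [h1, hVm1]
      have e2 : ‖V m - y‖ ^ 2 ≤ ((1 - t) * ‖x - y‖ + η) ^ 2 := by
        nlinarith only [h2, hVm2]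
      have e3 : ‖V m - m‖ ^ 2 ≤ 4 * t * (1 - t) * ‖x - y‖ * η + η ^ 2 := by
        nlinarith only [hid, e1, e2, ht0.le, ht1.le]
      have e4 : 4 * t * (1 - t) ≤ 1 := by nlinarith only [sq_nonneg (1 - 2 * t)]
      have e5 : ‖V m - m‖ ^ 2 ≤ (e i) ^ 2 := by
        nlinarith only [e3, hη24, hn1, sq_nonneg (e i),
          mul_le_mul_of_nonneg_right hLxy hη_mem.1.le,
          mul_le_mul_of_nonneg_right e4 (mul_nonneg hL0 hη_mem.1.le),
          mul_nonneg hL0 hη_mem.1.le, hη_mem.1.le, hη_mem.2]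
      have e6 : ‖V m - m‖ ≤ e i := by
        nlinarith only [e5, norm_nonneg (V m - m), hei.1]
      rw [norm_sub_rev]; exact e6
    have hmT : ‖m - T m‖ ≤ e i := hdefect T hTmaps hTne (hxT.trans hei1_le_η) hyT
    have hmU : ‖m - U m‖ ≤ e i := hdefect U hUmaps hUne (hxU.trans hei1_le_η) hyU
    have hmFN : m ∈ FN C T U N p (e i) := ⟨hmC, hmT, hmU, hmp⟩
    have hdi : d i ≤ ‖u - m‖ ^ 2 := csInf_le (hSbdd i) ⟨m, hmFN, rfl⟩
    have hexp : ‖u - m‖ ^ 2 = ‖u - x‖ ^ 2 - 2 * t * ⟪u - x, y - x⟫ + t ^ 2 * ‖y - x‖ ^ 2 := by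
      have hh : u - m = (u - x) - t • (y - x) := by rw [hmdef]; module
      rw [hh, inner_expand]
    have hyx : ‖y - x‖ ≤ 2 * (N : ℝ) := by rw [norm_sub_rev]; exact hLxy
    have hεt_eq : ε ^ 2 / (4 * (N : ℝ) ^ 2) = ε * t := by
      rw [htdef]; field_simp
    rw [hεt_eq] at hxlt
    simp only [] at hxlt
    have hxlt' : ‖u - x‖ ^ 2 < d i + ε * t := hxlt
    have h4 : 4 * (N : ℝ) ^ 2 * t ^ 2 = ε * t := by
      rw [htdef]; field_simp
    have h5 : t ^ 2 * ‖y - x‖ ^ 2 ≤ ε * t := by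
      nlinarith only [mul_le_mul hyx hyx (norm_nonneg (y - x)) (by positivity : (0:ℝ) ≤ 2 * (N:ℝ)),
        sq_nonneg t, h4]
    nlinarith only [hexp, hdi, hxlt', h5, ht0]
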